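/- Under the hypotheses of the two-prime vanishing theorem with i_0^{(1)} < j_1 ≤ m and i_0^{(2)} < j_2 ≤ ℓ, the multiplicative order of q modulo p_1^{j_1} p_2^{j_2} equals p_1^{j_1 - i_0^{(1)}} · p_2^{j_2 - i_0^{(2)}} · lcm((p_1-1)/δ_1', (p_2-1)/δ_2'). -/

import Mathlib

lemma zmod_pow_eq_one_iff (n q t : ℕ) (hq : 1 ≤ q ^ t) :
    (q : ZMod n) ^ t = 1 ↔ n ∣ q ^ t - 1 := by
  rw [← Nat.cast_pow, ← Nat.cast_one, ZMod.natCast_eq_natCast_iff,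
    Nat.ModEq.comm, Nat.modEq_iff_dvd' hq]

lemma padic_pow_one (p q d s : ℕ) (hp : p.Prime) (hpodd : Odd p)
    (hq2 : 2 ≤ q) (hd : 1 ≤ d) (hqp : ¬ p ∣ q) (hdvd : p ∣ q ^ d - 1) :
    padicValNat p (q ^ (d * p ^ s) - 1) = padicValNat p (q ^ d - 1) + s := by
  haveI : Fact p.Prime := ⟨hp⟩
  have h1 : 1 < q ^ d := Nat.one_lt_pow (by omega) (by omega)
  have hx : ¬ p ∣ q ^ d := fun h => hqp (hp.dvd_of_dvd_pow h)
  have := padicValNat.pow_sub_pow (p := p) (x := q ^ d) (y := 1) hpodd h1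
    (by simpa using hdvd) hx (n := p ^ s) (pow_ne_zero _ hp.pos.ne')
  simpa [pow_mul, padicValNat.prime_pow] using this

lemma order_mod_prime_pow (p q i0 j : ℕ) (hp : p.Prime) (hpodd : Odd p)
    (hq2 : 2 ≤ q) (hqp : ¬ p ∣ q)
    (hi0 : padicValNat p (q ^ orderOf (q : ZMod p) - 1) = i0)
    (hi01 : 1 ≤ i0) (hj : i0 ≤ j) :
    orderOf (q : ZMod (p ^ j)) = orderOf (q : ZMod p) * p ^ (j - i0) := by
  haveI : Fact p.Prime := ⟨hp⟩
  have hp2 : 2 ≤ p := hp.two_le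
  set d := orderOf (q : ZMod p) with hddef
  have hqne : (q : ZMod p) ≠ 0 := by
    rwa [Ne, ZMod.natCast_eq_zero_iff]
  have hdd : d ∣ p - 1 := by
    apply orderOf_dvd_of_pow_eq_one
    exact ZMod.pow_card_sub_one_eq_one hqne
  have hd1 : 1 ≤ d := by
    rcases Nat.eq_zero_or_pos d with h | h
    · rw [h] at hdd; have := Nat.eq_zero_of_zero_dvd hdd; omega
    · exact h
  have hdvdp : p ∣ q ^ d - 1 := by
    have h1 : (q : ZMod p) ^ d = 1 := pow_orderOf_eq_one _
    rwa [zmod_pow_eq_one_iff p q d (Nat.one_le_pow _ _ (by omega))] at h1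
  have key : ∀ s : ℕ, padicValNat p (q ^ (d * p ^ s) - 1) = i0 + s := by
    intro s
    rw [padic_pow_one p q d s hp hpodd hq2 hd1 hqp hdvdp, hi0]
  have hne : ∀ t : ℕ, 1 ≤ t → q ^ t - 1 ≠ 0 := by
    intro t ht
    have : 1 < q ^ t := Nat.one_lt_pow (by omega) (by omega)
    omega
  have hfwd : (q : ZMod (p ^ j)) ^ (d * p ^ (j - i0)) = 1 := by
    rw [zmod_pow_eq_one_iff _ q _ (Nat.one_le_pow _ _ (by omega))]
    rw [padicValNat_dvd_iff_le (hne _ (Nat.mul_pos hd1 (pow_pos hp.pos _))), key]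
    omega
  have hdvd1 : orderOf (q : ZMod (p ^ j)) ∣ d * p ^ (j - i0) :=
    orderOf_dvd_of_pow_eq_one hfwd
  set t := orderOf (q : ZMod (p ^ j)) with htdef
  have ht0 : t ≠ 0 := by
    intro h
    rw [h] at hdvd1
    have h1 := Nat.eq_zero_of_zero_dvd hdvd1
    have h2 : 0 < p ^ (j - i0) := pow_pos hp.pos _
    have := Nat.mul_eq_zero.mp h1
    omega
  have htone : (q : ZMod (p ^ j)) ^ t = 1 := pow_orderOf_eq_one _
  rw [zmod_pow_eq_one_iff _ q _ (Nat.one_le_pow _ _ (by omega))] at htone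
  have hdt : d ∣ t := by
    apply orderOf_dvd_of_pow_eq_one
    rw [zmod_pow_eq_one_iff p q t (Nat.one_le_pow _ _ (by omega))]
    exact dvd_trans (dvd_pow_self p (by omega : j ≠ 0)) htone
  obtain ⟨u, hu⟩ := hdt
  have hu' : u ∣ p ^ (j - i0) := by
    have h3 : d * u ∣ d * p ^ (j - i0) := hu ▸ hdvd1
    exact (mul_dvd_mul_iff_left (by omega : d ≠ 0)).mp h3
  obtain ⟨e, he, hue⟩ := (Nat.dvd_prime_pow hp).mp hu'
  have hje : j ≤ i0 + e := by
    have h2 : p ^ j ∣ q ^ (d * p ^ e) - 1 := by rw [← hue, ← hu]; exact htone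
    rwa [padicValNat_dvd_iff_le (hne _ (Nat.mul_pos hd1 (pow_pos hp.pos _))), key] at h2
  have hej : e = j - i0 := by omega
  rw [hu, hue, hej]

lemma order_mod_prime_pow_of_hyp (p q m δ' i0 j : ℕ) (hp : p.Prime) (hpodd : Odd p)
    (hqp : ¬ p ∣ q)
    (ho : orderOf (q : ZMod (p ^ m)) * (p ^ (i0 - 1) * δ') = Nat.totient (p ^ m))
    (hδ' : Nat.Coprime δ' p)
    (hi01 : 1 ≤ i0) (hj : i0 < j) (hjm : j ≤ m) :
    orderOf (q : ZMod (p ^ j)) = p ^ (j - i0) * ((p - 1) / δ') ∧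
      orderOf (q : ZMod p) * δ' = p - 1 := by
  haveI : Fact p.Prime := ⟨hp⟩
  have hp2 : 2 ≤ p := hp.two_le
  have hm1 : 1 ≤ m := by omega
  set T := orderOf (q : ZMod (p ^ m)) with hT
  have htot : Nat.totient (p ^ m) = p ^ (m - 1) * (p - 1) := by
    rw [Nat.totient_prime_pow hp (by omega)]
  have hδ'0 : δ' ≠ 0 := by
    rintro rfl
    rw [htot] at ho
    simp at ho
    have := pow_pos hp.pos (m - 1)
    omega
  have hT0 : T ≠ 0 := by
    rintro h
    rw [h, zero_mul, htot] at ho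
    have hpos : 0 < p ^ (m - 1) * (p - 1) := Nat.mul_pos (pow_pos hp.pos _) (by omega)
    omega
  have hpm1 : ¬ p ∣ (p - 1) := by
    intro h
    have := Nat.le_of_dvd (by omega) h
    omega
  have hvpm1 : padicValNat p (p - 1) = 0 := padicValNat.eq_zero_of_not_dvd hpm1
  have hδ'nd : ¬ p ∣ δ' := (Nat.Prime.coprime_iff_not_dvd hp).mp hδ'.symm
  have hvδ' : padicValNat p δ' = 0 := padicValNat.eq_zero_of_not_dvd hδ'nd
  have hvT : padicValNat p T = m - i0 := by
    have hv := congrArg (padicValNat p) ho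
    rw [htot, padicValNat.mul hT0 (mul_ne_zero (pow_ne_zero _ (by omega)) hδ'0),
      padicValNat.mul (pow_ne_zero _ (by omega)) hδ'0,
      padicValNat.mul (pow_ne_zero _ (by omega)) (by omega : p - 1 ≠ 0),
      padicValNat.prime_pow, padicValNat.prime_pow, hvpm1, hvδ'] at hv
    omega
  have hq0 : q ≠ 0 := by rintro rfl; exact hqp (dvd_zero p)
  have hq2 : 2 ≤ q := by
    rcases Nat.lt_or_ge q 2 with h | h
    · interval_cases q
      · omega
      · exfalso
        have h1 : T = 1 := by rw [hT, Nat.cast_one, orderOf_one]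
        rw [h1] at hvT
        simp [padicValNat.one] at hvT
        omega
    · exact h
  -- order mod p
  set d := orderOf (q : ZMod p) with hddef
  have hqne : (q : ZMod p) ≠ 0 := by
    rwa [Ne, ZMod.natCast_eq_zero_iff]
  have hdd : d ∣ p - 1 := by
    apply orderOf_dvd_of_pow_eq_one
    exact ZMod.pow_card_sub_one_eq_one hqne
  have hd1 : 1 ≤ d := by
    rcases Nat.eq_zero_or_pos d with h | h
    · rw [h] at hdd; have := Nat.eq_zero_of_zero_dvd hdd; omega
    · exact h
  have hdnd : ¬ p ∣ d := fun h => hpm1 (h.trans hdd)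
  have hdvdp : p ∣ q ^ d - 1 := by
    have h1 : (q : ZMod p) ^ d = 1 := pow_orderOf_eq_one _
    rwa [zmod_pow_eq_one_iff p q d (Nat.one_le_pow _ _ (by omega))] at h1
  have hqd1 : q ^ d - 1 ≠ 0 := by
    have : 1 < q ^ d := Nat.one_lt_pow (by omega) (by omega)
    omega
  set i0' := padicValNat p (q ^ d - 1) with hi0'def
  have hi0'1 : 1 ≤ i0' := one_le_padicValNat_of_dvd (by omega) hdvdp
  -- case split
  rcases le_or_gt i0' m with hcase | hcase
  · have hTm : T = d * p ^ (m - i0') :=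
      order_mod_prime_pow p q i0' m hp hpodd hq2 hqp rfl hi0'1 hcase
    have hvd : padicValNat p d = 0 := padicValNat.eq_zero_of_not_dvd hdnd
    have hi0eq : i0' = i0 := by
      rw [hTm, padicValNat.mul (by omega) (pow_ne_zero _ (by omega)),
        padicValNat.prime_pow, hvd] at hvT
      omega
    have hoj : orderOf (q : ZMod (p ^ j)) = d * p ^ (j - i0) := by
      rw [← hi0eq]
      exact order_mod_prime_pow p q i0' j hp hpodd hq2 hqp rfl hi0'1 (by omega)
    have hdδ' : d * δ' = p - 1 := by
      rw [hTm, hi0eq, htot] at ho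
      have hpp : p ^ (m - i0) * p ^ (i0 - 1) = p ^ (m - 1) := by
        rw [← pow_add]; congr 1; omega
      have harr : p ^ (m - 1) * (d * δ') = p ^ (m - 1) * (p - 1) := by
        rw [← ho, ← hpp]; ring
      exact Nat.eq_of_mul_eq_mul_left (pow_pos hp.pos _) harr
    have hdiv : (p - 1) / δ' = d := Nat.div_eq_of_eq_mul_left (by omega) (by omega)
    constructor
    · rw [hoj, hdiv, mul_comm]
    · exact hdδ'
  · exfalso
    have hTd : T ∣ d := by
      apply orderOf_dvd_of_pow_eq_one
      rw [zmod_pow_eq_one_iff _ q d (Nat.one_le_pow _ _ (by omega))]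
      rw [padicValNat_dvd_iff_le hqd1]
      omega
    have : ¬ p ∣ T := fun h => hpm1 (h.trans (hTd.trans hdd))
    have : padicValNat p T = 0 := padicValNat.eq_zero_of_not_dvd this
    omega

lemma lcm_split (x y d₁ d₂ : ℕ) (h1 : Nat.Coprime x (y * d₂)) (h2 : Nat.Coprime y d₁) :
    Nat.lcm (x * d₁) (y * d₂) = x * y * Nat.lcm d₁ d₂ := by
  have hg : Nat.gcd (x * d₁) (y * d₂) = Nat.gcd d₁ d₂ := by
    rw [Nat.Coprime.gcd_mul_left_cancel d₁ h1, Nat.Coprime.gcd_mul_left_cancel_right d₂ h2]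
  have hdg : Nat.gcd d₁ d₂ ∣ d₁ * d₂ := (Nat.gcd_dvd_left d₁ d₂).trans (dvd_mul_right _ _)
  rw [Nat.lcm, Nat.lcm, hg, ← Nat.mul_div_assoc _ hdg]
  congr 1
  ring




/-- under the two-prime hypotheses, for i01 < j₁ ≤ m and
i02 < j₂ ≤ ℓ, the multiplicative order of q mod p₁^{j₁} p₂^{j₂} equals
p₁^{j₁-i01} · p₂^{j₂-i02} · lcm((p₁-1)/δ₁', (p₂-1)/δ₂'). -/
theorem two_prime_order_formula
    (p₁ p₂ q m ℓ δ₁ δ₂ i01 i02 δ₁' δ₂' j₁ j₂ : ℕ)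
    (hp₁ : p₁.Prime) (hp₂ : p₂.Prime) (hp₁odd : Odd p₁) (hp₂odd : Odd p₂)
    (hlt : p₁ < p₂) (hndvd : ¬ p₁ ∣ (p₂ - 1))
    (hcop : Nat.Coprime q (p₁ * p₂))
    (hm : 1 ≤ m) (hℓ : 1 ≤ ℓ)
    (ho₁ : orderOf ((q : ZMod (p₁ ^ m))) * δ₁ = Nat.totient (p₁ ^ m))
    (ho₂ : orderOf ((q : ZMod (p₂ ^ ℓ))) * δ₂ = Nat.totient (p₂ ^ ℓ))
    (hi01 : 1 ≤ i01) (hi02 : 1 ≤ i02)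
    (hδ₁ : δ₁ = p₁ ^ (i01 - 1) * δ₁') (hδ₂ : δ₂ = p₂ ^ (i02 - 1) * δ₂')
    (hδ₁' : Nat.Coprime δ₁' p₁) (hδ₂' : Nat.Coprime δ₂' p₂)
    (hj₁ : i01 < j₁) (hj₁m : j₁ ≤ m) (hj₂ : i02 < j₂) (hj₂ℓ : j₂ ≤ ℓ) :
    orderOf ((q : ZMod (p₁ ^ j₁ * p₂ ^ j₂))) =
      p₁ ^ (j₁ - i01) * p₂ ^ (j₂ - i02) *
        Nat.lcm ((p₁ - 1) / δ₁') ((p₂ - 1) / δ₂') := by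
  rw [hδ₁] at ho₁
  rw [hδ₂] at ho₂
  have hqp₁ : ¬ p₁ ∣ q := fun h =>
    hp₁.one_lt.ne' (Nat.eq_one_of_dvd_coprimes hcop h (dvd_mul_right p₁ p₂))
  have hqp₂ : ¬ p₂ ∣ q := fun h =>
    hp₂.one_lt.ne' (Nat.eq_one_of_dvd_coprimes hcop h (dvd_mul_left p₂ p₁))
  obtain ⟨h₁, hd₁δ⟩ := order_mod_prime_pow_of_hyp p₁ q m δ₁' i01 j₁ hp₁ hp₁odd hqp₁ ho₁ hδ₁' hi01 hj₁ hj₁m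
  obtain ⟨h₂, hd₂δ⟩ := order_mod_prime_pow_of_hyp p₂ q ℓ δ₂' i02 j₂ hp₂ hp₂odd hqp₂ ho₂ hδ₂' hi02 hj₂ hj₂ℓ
  set D₁ := (p₁ - 1) / δ₁' with hD₁def
  set D₂ := (p₂ - 1) / δ₂' with hD₂def
  have hδ₁dvd : δ₁' ∣ p₁ - 1 := Dvd.intro_left _ hd₁δ
  have hδ₂dvd : δ₂' ∣ p₂ - 1 := Dvd.intro_left _ hd₂δ
  have hD₁mul : D₁ * δ₁' = p₁ - 1 := Nat.div_mul_cancel hδ₁dvd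
  have hD₂mul : D₂ * δ₂' = p₂ - 1 := Nat.div_mul_cancel hδ₂dvd
  have hD₁dvd : D₁ ∣ p₁ - 1 := ⟨δ₁', hD₁mul.symm⟩
  have hD₂dvd : D₂ ∣ p₂ - 1 := ⟨δ₂', hD₂mul.symm⟩
  have hp₁2 : 2 ≤ p₁ := hp₁.two_le
  have hp₂2 : 2 ≤ p₂ := hp₂.two_le
  have hD₁pos : 1 ≤ D₁ := by
    rcases Nat.eq_zero_or_pos D₁ with h | h
    · rw [h, zero_mul] at hD₁mul; omega
    · exact h
  -- coprimality facts for the lcm computation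
  have hp₁d₂ : ¬ p₁ ∣ D₂ := fun h => hndvd (h.trans hD₂dvd)
  have hp₂d₁ : ¬ p₂ ∣ D₁ := by
    intro h
    have h1 := Nat.le_of_dvd hD₁pos h
    have h2 := Nat.le_of_dvd (by omega) hD₁dvd
    omega
  have cop1 : Nat.Coprime (p₁ ^ (j₁ - i01)) (p₂ ^ (j₂ - i02) * D₂) := by
    apply Nat.Coprime.pow_left
    exact Nat.Coprime.mul_right
      (Nat.Coprime.pow_right _ ((Nat.coprime_primes hp₁ hp₂).mpr hlt.ne))
      ((Nat.Prime.coprime_iff_not_dvd hp₁).mpr hp₁d₂)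
  have cop2 : Nat.Coprime (p₂ ^ (j₂ - i02)) D₁ :=
    Nat.Coprime.pow_left _ ((Nat.Prime.coprime_iff_not_dvd hp₂).mpr hp₂d₁)
  have hppcop : Nat.Coprime (p₁ ^ j₁) (p₂ ^ j₂) :=
    Nat.Coprime.pow _ _ ((Nat.coprime_primes hp₁ hp₂).mpr hlt.ne)
  have horder : orderOf ((q : ZMod (p₁ ^ j₁ * p₂ ^ j₂))) =
      Nat.lcm (orderOf (q : ZMod (p₁ ^ j₁))) (orderOf (q : ZMod (p₂ ^ j₂))) := by
    set e := ZMod.chineseRemainder hppcop with hedef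
    have hh1 : orderOf ((q : ZMod (p₁ ^ j₁ * p₂ ^ j₂))) =
        orderOf (e ((q : ZMod (p₁ ^ j₁ * p₂ ^ j₂)))) :=
      (MulEquiv.orderOf_eq e.toMulEquiv _).symm
    have hh2 : e ((q : ZMod (p₁ ^ j₁ * p₂ ^ j₂))) =
        ((q : ZMod (p₁ ^ j₁)), (q : ZMod (p₂ ^ j₂))) := by
      rw [map_natCast]
      ext <;> simp
    rw [hh1, hh2, Prod.orderOf]
  rw [horder, h₁, h₂, lcm_split _ _ _ _ cop1 cop2]
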